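/- Let A be a diagonal m×m real matrix with nonnegative entries, Δt > 0, and S = (I + Δt²A)⁻¹. Then every eigenvalue of the 2m×2m block matrix M^IM = [[S, -ΔtAS], [ΔtS, S]] has the form λ = S_{kk} ± i·Δt·S_{kk}·√(A_{kk}) for some k, and satisfies |λ|² = S_{kk} ≤ 1. In particular the spectral radius of M^IM is at most 1. -/

import Mathlib

open Matrix Complex

private def sumProdEquiv (m : ℕ) : (Fin m ⊕ Fin m) ≃ (Fin 2 × Fin m) where
  toFun := Sum.elim (fun k => (0, k)) (fun k => (1, k))
  invFun := fun p => if p.1 = 0 then Sum.inl p.2 else Sum.inr p.2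
  left_inv := by rintro (k | k) <;> simp
  right_inv := by
    rintro ⟨i, k⟩
    fin_cases i <;> simp

private lemma det_fromBlocks_diag (m : ℕ) (a b c e : Fin m → ℂ) :
    (Matrix.fromBlocks (Matrix.diagonal a) (Matrix.diagonal b)
      (Matrix.diagonal c) (Matrix.diagonal e)).det
      = ∏ k : Fin m, (a k * e k - b k * c k) := by
  have hM : Matrix.fromBlocks (Matrix.diagonal a) (Matrix.diagonal b)
      (Matrix.diagonal c) (Matrix.diagonal e)
      = (Matrix.blockDiagonal (fun k => !![a k, b k; c k, e k])).submatrix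
          (sumProdEquiv m) (sumProdEquiv m) := by
    ext i j
    rcases i with k | k <;> rcases j with l | l <;>
      simp [sumProdEquiv, Matrix.blockDiagonal_apply, Matrix.diagonal_apply, eq_comm] <;>
      rcases eq_or_ne k l with h | h <;> simp [h]
  rw [hM, Matrix.det_submatrix_equiv_self, Matrix.det_blockDiagonal]
  congr 1
  ext k
  rw [Matrix.det_fin_two_of]

/-- Every eigenvalue of `M^IM = [[S, -ΔtAS], [ΔtS, S]]` (with `A = diagonal d`,
`d ≥ 0`, `S = (I + Δt²A)⁻¹`) has the form `S_kk ± i Δt S_kk √(A_kk)` and satisfies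
`|λ|² = S_kk ≤ 1`; in particular the spectral radius is at most 1. -/
theorem stmt1 (m : ℕ) (d : Fin m → ℝ) (hd : ∀ k, 0 ≤ d k) (Δt : ℝ) (hΔt : 0 < Δt)
    (A S MIM : Matrix (Fin m ⊕ Fin m) (Fin m ⊕ Fin m) ℂ)
    (Adiag : Matrix (Fin m) (Fin m) ℂ) (hA : Adiag = Matrix.diagonal (fun k => (d k : ℂ)))
    (Sdiag : Matrix (Fin m) (Fin m) ℂ)
    (hS : Sdiag = (1 + (Δt : ℂ) ^ 2 • Adiag)⁻¹)
    (hM : MIM = Matrix.fromBlocks Sdiag (-((Δt : ℂ) • (Adiag * Sdiag)))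
      ((Δt : ℂ) • Sdiag) Sdiag) :
    (∀ lam ∈ spectrum ℂ MIM, ∃ k : Fin m,
        (lam = (1 / (1 + Δt ^ 2 * d k) : ℝ) + Complex.I * Δt * (1 / (1 + Δt ^ 2 * d k) : ℝ) * (Real.sqrt (d k) : ℝ)
          ∨ lam = (1 / (1 + Δt ^ 2 * d k) : ℝ) - Complex.I * Δt * (1 / (1 + Δt ^ 2 * d k) : ℝ) * (Real.sqrt (d k) : ℝ))
        ∧ ‖lam‖ ^ 2 = 1 / (1 + Δt ^ 2 * d k)
        ∧ (1 / (1 + Δt ^ 2 * d k) : ℝ) ≤ 1)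
      ∧ ∀ lam ∈ spectrum ℂ MIM, ‖lam‖ ≤ 1 := by
  -- basic real quantities
  set t : Fin m → ℝ := fun k => 1 + Δt ^ 2 * d k with ht
  have htpos : ∀ k, 0 < t k := fun k => by
    show 0 < 1 + Δt ^ 2 * d k
    have := hd k; have := sq_nonneg Δt; nlinarith
  have htne : ∀ k, (t k : ℝ) ≠ 0 := fun k => (htpos k).ne'
  set s : Fin m → ℝ := fun k => 1 / t k with hsdef
  have hspos : ∀ k, 0 < s k := fun k => one_div_pos.2 (htpos k)
  -- Sdiag is diagonal with entries s
  have hst : ∀ k, s k * t k = 1 := fun k => one_div_mul_cancel (htne k)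
  have hSd : Sdiag = Matrix.diagonal (fun k => (s k : ℂ)) := by
    rw [hS, hA]
    apply Matrix.inv_eq_left_inv
    rw [← Matrix.diagonal_one, ← Matrix.diagonal_smul, Matrix.diagonal_add,
      Matrix.diagonal_mul_diagonal]
    apply congrArg Matrix.diagonal
    funext k
    show (s k : ℂ) * ((1:ℂ) + (Δt:ℂ) ^ 2 * (d k : ℂ)) = 1
    have h1 : ((s k * t k : ℝ) : ℂ) = 1 := by rw [hst k]; norm_num
    calc (s k : ℂ) * ((1:ℂ) + (Δt:ℂ) ^ 2 * (d k : ℂ))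
        = ((s k * t k : ℝ) : ℂ) := by rw [ht]; push_cast; ring
      _ = 1 := h1
  -- the key determinant fact
  have hdet : ∀ lam : ℂ, lam ∈ spectrum ℂ MIM →
      ∃ k : Fin m, (lam - s k) ^ 2 + (Δt : ℂ) ^ 2 * (d k) * (s k) ^ 2 = 0 := by
    intro lam hlam
    rw [spectrum.mem_iff] at hlam
    have halg : (algebraMap ℂ (Matrix (Fin m ⊕ Fin m) (Fin m ⊕ Fin m) ℂ)) lam - MIM
        = Matrix.fromBlocks
            (Matrix.diagonal (fun k => lam - (s k : ℂ)))
            (Matrix.diagonal (fun k => (Δt : ℂ) * d k * s k))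
            (Matrix.diagonal (fun k => -((Δt : ℂ) * s k)))
            (Matrix.diagonal (fun k => lam - (s k : ℂ))) := by
      rw [hM, hSd, hA, Matrix.algebraMap_eq_diagonal]
      ext i j
      rcases i with k | k <;> rcases j with l | l <;>
        simp [Matrix.diagonal_apply, Matrix.fromBlocks, Matrix.diagonal_mul_diagonal,
          Pi.algebraMap_apply, Algebra.algebraMap_self_apply] <;>
        rcases eq_or_ne k l with h | h <;> simp [h] <;> ring
    have hdet0 : ((algebraMap ℂ (Matrix (Fin m ⊕ Fin m) (Fin m ⊕ Fin m) ℂ)) lam - MIM).det = 0 := by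
      by_contra h
      exact hlam ((Matrix.isUnit_iff_isUnit_det _).2 (isUnit_iff_ne_zero.2 h))
    rw [halg, det_fromBlocks_diag] at hdet0
    rcases Finset.prod_eq_zero_iff.1 hdet0 with ⟨k, -, hk⟩
    refine ⟨k, ?_⟩
    rw [← hk]; ring
  -- from the quadratic, derive the two roots
  have hroot : ∀ lam : ℂ, lam ∈ spectrum ℂ MIM → ∃ k : Fin m,
      lam = (s k : ℂ) + Complex.I * Δt * (s k : ℂ) * (Real.sqrt (d k) : ℂ)
      ∨ lam = (s k : ℂ) - Complex.I * Δt * (s k : ℂ) * (Real.sqrt (d k) : ℂ) := by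
    intro lam hlam
    obtain ⟨k, hk⟩ := hdet lam hlam
    refine ⟨k, ?_⟩
    have hdk : ((Real.sqrt (d k) : ℝ) : ℂ) ^ 2 = (d k : ℂ) := by
      rw [← Complex.ofReal_pow, Real.sq_sqrt (hd k)]
    have hfac : (lam - ((s k : ℂ) + Complex.I * Δt * (s k : ℂ) * (Real.sqrt (d k) : ℂ)))
        * (lam - ((s k : ℂ) - Complex.I * Δt * (s k : ℂ) * (Real.sqrt (d k) : ℂ))) = 0 := by
      have : (lam - ((s k : ℂ) + Complex.I * Δt * (s k : ℂ) * (Real.sqrt (d k) : ℂ)))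
          * (lam - ((s k : ℂ) - Complex.I * Δt * (s k : ℂ) * (Real.sqrt (d k) : ℂ)))
          = (lam - (s k : ℂ)) ^ 2 - Complex.I ^ 2 * (Δt : ℂ) ^ 2 * (s k : ℂ) ^ 2
              * ((Real.sqrt (d k) : ℝ) : ℂ) ^ 2 := by ring
      rw [this, hdk, Complex.I_sq]
      rw [← hk]; ring
    rcases mul_eq_zero.1 hfac with h | h
    · exact Or.inl (sub_eq_zero.1 h)
    · exact Or.inr (sub_eq_zero.1 h)
  -- abs² computation
  have habs : ∀ k : Fin m, ∀ lam : ℂ,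
      (lam = (s k : ℂ) + Complex.I * Δt * (s k : ℂ) * (Real.sqrt (d k) : ℂ)
        ∨ lam = (s k : ℂ) - Complex.I * Δt * (s k : ℂ) * (Real.sqrt (d k) : ℂ)) →
      ‖lam‖ ^ 2 = s k := by
    intro k lam h
    have key : ∀ b : ℝ, ‖(s k : ℂ) + (b : ℂ) * Complex.I‖ ^ 2
        = (s k) ^ 2 + b ^ 2 := by
      intro b
      rw [← Complex.normSq_eq_norm_sq, Complex.normSq_add_mul_I]
    have hval : (s k) ^ 2 + (Δt * s k * Real.sqrt (d k)) ^ 2 = s k := by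
      have hsq : Real.sqrt (d k) ^ 2 = d k := Real.sq_sqrt (hd k)
      calc (s k) ^ 2 + (Δt * s k * Real.sqrt (d k)) ^ 2
          = (s k) ^ 2 * (1 + Δt ^ 2 * d k) := by rw [mul_pow, mul_pow, hsq]; ring
        _ = s k * (s k * t k) := by rw [ht]; ring
        _ = s k := by rw [hst k, mul_one]
    rcases h with h | h
    · have : lam = (s k : ℂ) + ((Δt * s k * Real.sqrt (d k) : ℝ) : ℂ) * Complex.I := by
        rw [h]; push_cast; ring
      rw [this, key, hval]
    · have : lam = (s k : ℂ) + ((-(Δt * s k * Real.sqrt (d k)) : ℝ) : ℂ) * Complex.I := by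
        rw [h]; push_cast; ring
      rw [this, key, neg_sq, hval]
  have hsle1 : ∀ k, s k ≤ 1 := by
    intro k
    rw [hsdef, div_le_one (htpos k)]
    show (1:ℝ) ≤ 1 + Δt ^ 2 * d k
    have := hd k; have := sq_nonneg Δt; nlinarith
  have main : ∀ lam ∈ spectrum ℂ MIM, ∃ k : Fin m,
      (lam = (1 / (1 + Δt ^ 2 * d k) : ℝ) + Complex.I * Δt * (1 / (1 + Δt ^ 2 * d k) : ℝ) * (Real.sqrt (d k) : ℝ)
        ∨ lam = (1 / (1 + Δt ^ 2 * d k) : ℝ) - Complex.I * Δt * (1 / (1 + Δt ^ 2 * d k) : ℝ) * (Real.sqrt (d k) : ℝ))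
      ∧ ‖lam‖ ^ 2 = 1 / (1 + Δt ^ 2 * d k)
      ∧ (1 / (1 + Δt ^ 2 * d k) : ℝ) ≤ 1 := by
    intro lam hlam
    obtain ⟨k, hk⟩ := hroot lam hlam
    exact ⟨k, hk, habs k lam hk, hsle1 k⟩
  refine ⟨main, fun lam hlam => ?_⟩
  obtain ⟨k, -, habs2, hle⟩ := main lam hlam
  nlinarith [norm_nonneg lam, habs2, hle]
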